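/- In the symmetric two-type Richardson model on ℤ^d (d ≥ 2, both infections at rate 1) started from ξ₁ = {0} and ξ₂ = {e₁}, each of the two strangulation outcomes has positive probability: P(G₁ ∩ G₂ᶜ) > 0 and P(G₂ ∩ G₁ᶜ) > 0, i.e., with positive probability type 1 infects infinitely many sites while type 2 infects only finitely many, and vice versa. -/

import Mathlib

open MeasureTheory ProbabilityTheory Filter
open scoped Classical Pointwise

/-- Nearest-neighbour adjacency on `ℤ^d`: Euclidean (equivalently `ℓ¹`) distance one. -/
def Adj {d : ℕ} (x y : Fin d → ℤ) : Prop := (∑ i, |x i - y i|) = 1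

/-- The set of nearest-neighbour edges of `ℤ^d`, as unordered pairs of adjacent vertices. -/
def Edge (d : ℕ) : Type := {e : Sym2 (Fin d → ℤ) // ∃ x y, Adj x y ∧ e = s(x, y)}

/-- The passage time attached to the edge `{x, y}` (junk value `0` if `x,y` not adjacent). -/
noncomputable def edgeTime {d : ℕ} (ω : Edge d → ℝ) (x y : Fin d → ℤ) : ℝ :=
  if h : Adj x y then ω ⟨s(x, y), x, y, h, rfl⟩ else 0

/-- The total passage time along a path, recorded as its list of visited vertices. -/
noncomputable def pathTime {d : ℕ} (ω : Edge d → ℝ) : List (Fin d → ℤ) → ℝ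
  | [] => 0
  | [_] => 0
  | x :: y :: γ => edgeTime ω x y + pathTime ω (y :: γ)

/-- `IsPath x y γ` : `γ` is a finite nearest-neighbour path from `x` to `y` in `ℤ^d`. -/
def IsPath {d : ℕ} (x y : Fin d → ℤ) (γ : List (Fin d → ℤ)) : Prop :=
  γ.head? = some x ∧ γ.getLast? = some y ∧ γ.Chain' Adj

/-- The first-passage time `T(x,y)`: infimum over all paths from `x` to `y` of the
sum of the passage times of the traversed edges. -/
noncomputable def T {d : ℕ} (ω : Edge d → ℝ) (x y : Fin d → ℤ) : ℝ :=
  sInf {t | ∃ γ, IsPath x y γ ∧ t = pathTime ω γ}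

/-- The passage time `T(S,x)` from a set `S` of vertices to the vertex `x`. -/
noncomputable def TS {d : ℕ} (ω : Edge d → ℝ) (S : Set (Fin d → ℤ)) (x : Fin d → ℤ) : ℝ :=
  sInf {t | ∃ y ∈ S, t = T ω y x}

/-- `IIDExp lam P` : under `P`, the edge passage times `ω ↦ ω e`, `e ∈ E_d`, are independent,
each exponentially distributed with rate `lam`, i.e. `P(ω e > t) = exp (- lam * t)`. -/
def IIDExp {d : ℕ} (lam : ℝ) (P : Measure (Edge d → ℝ)) : Prop :=
  iIndepFun (fun (e : Edge d) (ω : Edge d → ℝ) => ω e) P ∧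
  ∀ (e : Edge d) (t : ℝ), 0 ≤ t → P {ω | ω e > t} = ENNReal.ofReal (Real.exp (-(lam * t)))

/-- The origin of `ℤ^d`. -/
def origin (d : ℕ) : Fin d → ℤ := fun _ => 0

/-- The first standard basis vector `e₁ = (1,0,…,0)` of `ℤ^d`. -/
def e1 (d : ℕ) : Fin d → ℤ := fun i => if (i : ℕ) = 0 then 1 else 0

/-- The event that, in the symmetric two-type Richardson model started from `(ξa, ξb)`,
infinitely many vertices are eventually infected by the type carried by `ξa`. -/
def Gevent {d : ℕ} (ξa ξb : Set (Fin d → ℤ)) : Set (Edge d → ℝ) :=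
  {ω | {x | TS ω ξa x < TS ω ξb x}.Infinite}

open scoped ENNReal

section Aux
variable {d : ℕ}

lemma adj_update (u : Fin d → ℤ) (j : Fin d) (s : ℤ) (hs : |s| = 1) :
    Adj u (Function.update u j (u j + s)) := by
  unfold Adj
  have h1 : ∀ i, |u i - Function.update u j (u j + s) i| = if i = j then 1 else 0 := by
    intro i
    by_cases h : i = j
    · subst h; simpa using hs
    · simp [Function.update, h]
  rw [Finset.sum_congr rfl fun i _ => h1 i]
  simp

lemma sum_abs_sub_update (u v : Fin d → ℤ) (j : Fin d) (c : ℤ) :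
    (∑ i, |Function.update u j c i - v i|) = (∑ i, |u i - v i|) - |u j - v j| + |c - v j| := by
  have h1 : (fun i => |Function.update u j c i - v i|)
      = Function.update (fun i => |u i - v i|) j (|c - v j|) := by
    ext i
    by_cases h : i = j
    · subst h; simp
    · simp [Function.update, h]
  rw [h1, Finset.sum_update_of_mem (Finset.mem_univ j),
    ← Finset.add_sum_erase Finset.univ _ (Finset.mem_univ j)]
  simp [Finset.erase_eq]
  ring

lemma boxedPathAux : ∀ (n : ℕ) (u v : Fin d → ℤ), (∑ i, |u i - v i|) = n →
    ∃ γ, IsPath u v γ ∧ ∀ w ∈ γ, ∀ i, min (u i) (v i) ≤ w i ∧ w i ≤ max (u i) (v i) := by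
  intro n
  induction n with
  | zero =>
    intro u v h
    have huv : u = v := by
      ext i
      have h0 : ∀ i ∈ Finset.univ, (0:ℤ) ≤ |u i - v i| := fun i _ => abs_nonneg _
      have := (Finset.sum_eq_zero_iff_of_nonneg h0).mp (by simpa using h) i (Finset.mem_univ i)
      have := abs_eq_zero.mp this
      omega
    subst huv
    exact ⟨[u], ⟨rfl, rfl, List.isChain_singleton u⟩, by
      intro w hw i
      simp at hw
      subst hw
      simp⟩
  | succ n ih =>
    intro u v h
    have hne : ∃ j, u j ≠ v j := by
      by_contra hc
      push_neg at hc
      have : (∑ i, |u i - v i|) = 0 := Finset.sum_eq_zero fun i _ => by rw [hc i]; simp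
      omega
    obtain ⟨j, hj⟩ := hne
    set s : ℤ := if u j < v j then 1 else -1 with hs
    have hs1 : |s| = 1 := by
      rw [hs]; split <;> simp
    set u' := Function.update u j (u j + s) with hu'
    have hdec : (∑ i, |u' i - v i|) = n := by
      rw [hu', sum_abs_sub_update]
      have habs : |u j + s - v j| = |u j - v j| - 1 := by
        rw [hs]
        rcases lt_or_gt_of_ne hj with hlt | hgt
        · rw [if_pos hlt, abs_of_nonpos (by omega), abs_of_neg (by omega)]; ring
        · rw [if_neg (by omega), abs_of_nonneg (by omega), abs_of_pos (by omega)]; ring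
      rw [habs]; omega
    obtain ⟨γ', hγ', hbox⟩ := ih u' v hdec
    obtain ⟨hh, hl, hc⟩ := hγ'
    refine ⟨u :: γ', ⟨rfl, ?_, ?_⟩, ?_⟩
    · rcases γ' with _ | ⟨w, t⟩
      · simp at hh
      · rw [List.getLast?_cons_cons]; exact hl
    · rw [List.Chain', List.isChain_cons]
      refine ⟨?_, hc⟩
      intro z hz
      rcases γ' with _ | ⟨w, t⟩
      · simp at hz
      · simp at hh hz
        subst hh; subst hz
        exact adj_update u j s hs1
    · intro w hw i
      rcases List.mem_cons.mp hw with rfl | hw'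
      · constructor
        · exact min_le_left _ _
        · exact le_max_left _ _
      · have := hbox w hw' i
        have hui : u' i = if i = j then u j + s else u i := by
          rw [hu']; by_cases hij : i = j
          · subst hij; simp
          · simp [Function.update, hij]
        by_cases hij : i = j
        · subst hij
          rw [if_pos rfl] at hui
          rw [hs] at hui
          rcases lt_or_gt_of_ne hj with hlt | hgt
          · rw [if_pos hlt] at hui; omega
          · rw [if_neg (by omega)] at hui; omega
        · rw [if_neg hij] at hui; omega

lemma boxedPath (u v : Fin d → ℤ) :
    ∃ γ, IsPath u v γ ∧ ∀ w ∈ γ, ∀ i, min (u i) (v i) ≤ w i ∧ w i ≤ max (u i) (v i) := by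
  have h0 : (0:ℤ) ≤ ∑ i, |u i - v i| := Finset.sum_nonneg fun i _ => abs_nonneg _
  exact boxedPathAux (∑ i, |u i - v i|).toNat u v (Int.toNat_of_nonneg h0).symm

lemma exists_path (u v : Fin d → ℤ) : ∃ γ, IsPath u v γ :=
  (boxedPath u v).imp fun γ h => h.1

end Aux

section Aux2
variable {d : ℕ}

lemma edgeTime_nonneg {ω : Edge d → ℝ} (hω : ∀ e, 0 ≤ ω e) (x y : Fin d → ℤ) :
    0 ≤ edgeTime ω x y := by
  unfold edgeTime; split
  · exact hω _
  · exact le_refl 0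

lemma pathTime_nonneg {ω : Edge d → ℝ} (hω : ∀ e, 0 ≤ ω e) : ∀ γ, 0 ≤ pathTime ω γ
  | [] => le_refl 0
  | [_] => le_refl 0
  | x :: y :: t => by
    rw [show pathTime ω (x :: y :: t) = edgeTime ω x y + pathTime ω (y :: t) from rfl]
    have := pathTime_nonneg hω (y :: t)
    have := edgeTime_nonneg hω x y
    linarith

lemma pathTime_append (ω : Edge d → ℝ) (c : Fin d → ℤ) (t : List (Fin d → ℤ)) :
    ∀ l1, l1.getLast? = some c → pathTime ω (l1 ++ t) = pathTime ω l1 + pathTime ω (c :: t)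
  | [], h => by simp at h
  | [a], h => by
    simp at h
    subst h
    show pathTime ω (a :: t) = 0 + pathTime ω (a :: t)
    ring
  | a :: b :: l, h => by
    rw [List.getLast?_cons_cons] at h
    show edgeTime ω a b + pathTime ω ((b :: l) ++ t) = (edgeTime ω a b + pathTime ω (b :: l)) + _
    rw [pathTime_append ω c t (b :: l) h]
    ring

lemma isPath_trans (ω : Edge d → ℝ) {a c x : Fin d → ℤ} {l1 l2 : List (Fin d → ℤ)}
    (h1 : IsPath a c l1) (h2 : IsPath c x l2) :
    ∃ l, IsPath a x l ∧ (∀ w ∈ l, w ∈ l1 ∨ w ∈ l2) ∧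
      pathTime ω l = pathTime ω l1 + pathTime ω l2 := by
  obtain ⟨hh1, hl1, hc1⟩ := h1
  obtain ⟨hh2, hl2, hc2⟩ := h2
  rcases l2 with _ | ⟨c', t⟩
  · simp at hh2
  simp at hh2
  subst hh2
  refine ⟨l1 ++ t, ⟨?_, ?_, ?_⟩, ?_, pathTime_append ω _ t l1 hl1⟩
  · rcases l1 with _ | ⟨a', l⟩
    · simp at hh1
    · simpa using hh1
  · rcases t with _ | ⟨w, t'⟩
    · simp at hl2
      subst hl2
      simpa using hl1
    · rw [List.getLast?_append, List.getLast?_cons_cons] at *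
      rw [hl2]
      rfl
  · rw [List.Chain', List.isChain_append]
    refine ⟨hc1, (List.isChain_cons.mp hc2).2, ?_⟩
    intro p hp q hq
    rw [hl1] at hp
    simp at hp
    subst hp
    exact (List.isChain_cons.mp hc2).1 q hq
  · intro w hw
    rcases List.mem_append.mp hw with h | h
    · exact Or.inl h
    · exact Or.inr (List.mem_cons_of_mem _ h)

lemma path_decomp {b x : Fin d → ℤ} {γ : List (Fin d → ℤ)} (h : IsPath b x γ) (hx : x ≠ b) :
    ∃ y rest, γ = b :: y :: rest ∧ Adj b y ∧ IsPath y x (y :: rest) := by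
  obtain ⟨hh, hl, hc⟩ := h
  rcases γ with _ | ⟨b', t⟩
  · simp at hh
  simp at hh
  subst hh
  rcases t with _ | ⟨y, rest⟩
  · simp at hl
    exact absurd hl.symm hx
  refine ⟨y, rest, rfl, (List.isChain_cons_cons.mp hc).1, rfl, ?_, (List.isChain_cons_cons.mp hc).2⟩
  rw [List.getLast?_cons_cons] at hl
  exact hl

section Aux3
variable {d : ℕ}

lemma adj_ne {x y : Fin d → ℤ} (h : Adj x y) : x ≠ y := by
  rintro rfl; simp [Adj] at h

lemma adj_symm' {x y : Fin d → ℤ} (h : Adj x y) : Adj y x := by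
  unfold Adj at *
  rw [← h]
  exact Finset.sum_congr rfl fun i _ => abs_sub_comm _ _

lemma isPath_reverse {a c : Fin d → ℤ} {l : List (Fin d → ℤ)} (h : IsPath a c l) :
    IsPath c a l.reverse := by
  obtain ⟨hh, hl, hc⟩ := h
  refine ⟨?_, ?_, ?_⟩
  · rw [List.head?_reverse]; exact hl
  · rw [List.getLast?_reverse]; exact hh
  · rw [List.Chain', List.isChain_reverse]; exact hc.imp fun _ _ hab => adj_symm' hab

lemma avoid_path (hd : 2 ≤ d) (b x y : Fin d → ℤ) (hx : x ≠ b) (hy : y ≠ b) :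
    ∃ γ, IsPath x y γ ∧ ∀ w ∈ γ, w ≠ b := by
  have h0d : 0 < d := by omega
  have h1d : 1 < d := by omega
  set j0 : Fin d := ⟨0, h0d⟩ with hj0def
  set j1 : Fin d := ⟨1, h1d⟩ with hj1def
  have hj01 : j1 ≠ j0 := by simp [hj0def, hj1def, Fin.ext_iff]
  set ω0 : Edge d → ℝ := fun _ => 0 with hω0
  have step : ∀ z : Fin d → ℤ, z ≠ b →
      ∃ z' l, IsPath z z' l ∧ (∀ w ∈ l, w ≠ b) ∧ z' j0 ≠ b j0 := by
    intro z hz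
    by_cases hz0 : z j0 = b j0
    · refine ⟨Function.update z j0 (z j0 + 1), [z, Function.update z j0 (z j0 + 1)],
        ⟨rfl, by simp, ?_⟩, ?_, ?_⟩
      · rw [List.Chain', List.isChain_pair]
        exact adj_update z j0 1 (by simp)
      · intro w hw
        simp at hw
        rcases hw with rfl | rfl
        · exact hz
        · intro hb
          have := congrFun hb j0
          simp at this
          omega
      · simp
        omega
    · exact ⟨z, [z], ⟨rfl, rfl, List.isChain_singleton z⟩, by simpa using hz, hz0⟩
  obtain ⟨x', lx, hlx, hlxb, hx'0⟩ := step x hx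
  obtain ⟨y', ly, hly, hlyb, hy'0⟩ := step y hy
  set M : ℤ := max (max (x' j1) (y' j1)) (b j1) + 1 with hM
  set x'' := Function.update x' j1 M with hx''
  set y'' := Function.update y' j1 M with hy''
  obtain ⟨p1, hp1, hbox1⟩ := boxedPath x' x''
  obtain ⟨p2, hp2, hbox2⟩ := boxedPath x'' y''
  obtain ⟨p3, hp3, hbox3⟩ := boxedPath y'' y'
  have hp1b : ∀ w ∈ p1, w ≠ b := by
    intro w hw hb
    have h := hbox1 w hw j0
    have hx''0 : x'' j0 = x' j0 := by rw [hx'']; simp [Function.update, hj01.symm]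
    rw [hx''0] at h
    subst hb
    simp at h
    omega
  have hMx : x'' j1 = M := by rw [hx'']; simp
  have hMy : y'' j1 = M := by rw [hy'']; simp
  have hp2b : ∀ w ∈ p2, w ≠ b := by
    intro w hw hb
    have h := hbox2 w hw j1
    rw [hMx, hMy] at h
    subst hb
    simp at h
    omega
  have hp3b : ∀ w ∈ p3, w ≠ b := by
    intro w hw hb
    have h := hbox3 w hw j0
    have hy''0 : y'' j0 = y' j0 := by rw [hy'']; simp [Function.update, hj01.symm]
    rw [hy''0] at h
    subst hb
    simp at h
    omega
  obtain ⟨l1, hl1, hm1, -⟩ := isPath_trans ω0 hlx hp1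
  obtain ⟨l2, hl2, hm2, -⟩ := isPath_trans ω0 hl1 hp2
  obtain ⟨l3, hl3, hm3, -⟩ := isPath_trans ω0 hl2 hp3
  obtain ⟨l4, hl4, hm4, -⟩ := isPath_trans ω0 hl3 (isPath_reverse hly)
  refine ⟨l4, hl4, ?_⟩
  intro w hw
  rcases hm4 w hw with h | h
  · rcases hm3 w h with h | h
    · rcases hm2 w h with h | h
      · rcases hm1 w h with h | h
        · exact hlxb w h
        · exact hp1b w h
      · exact hp2b w h
    · exact hp3b w h
  · exact hlyb w (List.mem_reverse.mp h)

end Aux3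

section Aux4
variable {d : ℕ}

noncomputable def mkEdge {x y : Fin d → ℤ} (h : Adj x y) : Edge d := ⟨s(x,y), x, y, h, rfl⟩

noncomputable def listEdges : List (Fin d → ℤ) → List (Edge d)
  | [] => []
  | [_] => []
  | x :: y :: t => (if h : Adj x y then [mkEdge h] else []) ++ listEdges (y :: t)

lemma pathTime_le_length {ω : Edge d → ℝ} :
    ∀ γ : List (Fin d → ℤ), γ.Chain' Adj → (∀ E ∈ listEdges γ, ω E < 1) →
      pathTime ω γ ≤ (γ.length : ℝ)
  | [], _, _ => by simp [pathTime]
  | [_], _, _ => by simp [pathTime]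
  | x :: y :: t, hc, hsm => by
    have hadj : Adj x y := (List.isChain_cons_cons.mp hc).1
    have hrec := pathTime_le_length (y :: t) (List.isChain_cons_cons.mp hc).2
      (fun E hE => hsm E (by simp [listEdges, hadj]; right; exact hE))
    have hedge : edgeTime ω x y = ω (mkEdge hadj) := dif_pos hadj
    have hsmall : ω (mkEdge hadj) < 1 := hsm _ (by simp [listEdges, hadj])
    show edgeTime ω x y + pathTime ω (y :: t) ≤ ((x :: y :: t).length : ℝ)
    rw [hedge]
    simp only [List.length_cons] at *
    push_cast at *
    linarith

lemma listEdges_avoid {b : Fin d → ℤ} :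
    ∀ γ : List (Fin d → ℤ), (∀ w ∈ γ, w ≠ b) → ∀ E ∈ listEdges γ, b ∉ E.val
  | [], _, E, hE => by simp [listEdges] at hE
  | [_], _, E, hE => by simp [listEdges] at hE
  | x :: y :: t, hγ, E, hE => by
    simp only [listEdges] at hE
    rcases List.mem_append.mp hE with h | h
    · have hadj : Adj x y := by
        by_contra hna
        simp [hna] at h
      simp [hadj] at h
      subst h
      intro hmem
      have : b = x ∨ b = y := Sym2.mem_iff.mp hmem
      rcases this with rfl | rfl
      · exact hγ b (by simp) rfl
      · exact hγ b (by simp) rfl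
    · exact listEdges_avoid (y :: t) (fun w hw => hγ w (List.mem_cons_of_mem _ hw)) E h

end Aux4

section Aux5
variable {d : ℕ}

instance edgeCountable : Countable (Edge d) := by
  unfold Edge
  infer_instance

noncomputable def nb (b : Fin d → ℤ) : Finset (Fin d → ℤ) :=
  Finset.image
    (fun p : Fin d × Bool => Function.update b p.1 (b p.1 + (if p.2 then 1 else -1)))
    Finset.univ

lemma adj_of_mem_nb {b y : Fin d → ℤ} (h : y ∈ nb b) : Adj b y := by
  simp only [nb, Finset.mem_image] at h
  obtain ⟨p, -, rfl⟩ := h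
  exact adj_update b p.1 _ (by rcases p.2 <;> simp)

lemma adj_classify' {b y : Fin d → ℤ} (h : Adj b y) :
    ∃ j s, |s| = 1 ∧ y = Function.update b j (b j + s) := by
  have hne : b ≠ y := adj_ne h
  have : ∃ j, b j ≠ y j := by
    by_contra hc
    push_neg at hc
    exact hne (funext hc)
  obtain ⟨j, hj⟩ := this
  have hsum := h
  unfold Adj at hsum
  have hsplit : (∑ i, |b i - y i|) = |b j - y j| + ∑ i ∈ Finset.univ.erase j, |b i - y i| :=
    (Finset.add_sum_erase Finset.univ _ (Finset.mem_univ j)).symm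
  have hpos : 1 ≤ |b j - y j| := Int.one_le_abs (sub_ne_zero.mpr hj)
  have hrest : (∑ i ∈ Finset.univ.erase j, |b i - y i|) = 0 := by
    have h0 : 0 ≤ ∑ i ∈ Finset.univ.erase j, |b i - y i| :=
      Finset.sum_nonneg fun i _ => abs_nonneg _
    omega
  have heq : ∀ i ∈ Finset.univ.erase j, |b i - y i| = 0 := by
    intro i hi
    have := Finset.sum_eq_zero_iff_of_nonneg (fun i _ => abs_nonneg (b i - y i)) |>.mp hrest
    exact this i hi
  refine ⟨j, y j - b j, ?_, ?_⟩
  · have : |b j - y j| = 1 := by omega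
    rw [abs_sub_comm] at this; exact this
  · ext i
    by_cases hij : i = j
    · subst hij; simp
    · have := heq i (Finset.mem_erase.mpr ⟨hij, Finset.mem_univ i⟩)
      have hbi : b i = y i := sub_eq_zero.mp (abs_eq_zero.mp this)
      simp [Function.update, hij, hbi.symm]

lemma mem_nb_of_adj {b y : Fin d → ℤ} (h : Adj b y) : y ∈ nb b := by
  obtain ⟨j, s, hs, rfl⟩ := adj_classify' h
  rcases (abs_eq (by norm_num : (0:ℤ) ≤ 1)).mp hs with rfl | rfl
  · exact Finset.mem_image.mpr ⟨(j, true), Finset.mem_univ _, by simp⟩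
  · exact Finset.mem_image.mpr ⟨(j, false), Finset.mem_univ _, by simp⟩

end Aux5


section Aux6
variable {d : ℕ}

lemma TS_singleton (ω : Edge d → ℝ) (c x : Fin d → ℤ) : TS ω {c} x = T ω c x := by
  unfold TS
  have h : {t | ∃ y ∈ ({c} : Set (Fin d → ℤ)), t = T ω y x} = {T ω c x} := by
    ext t
    simp
  rw [h, csInf_singleton]

lemma core_ineq (a b : Fin d → ℤ)
    (γfun : (Fin d → ℤ) → List (Fin d → ℤ))
    (hγ : ∀ y ∈ nb b, IsPath a y (γfun y))
    (K : ℝ) (hK : ∀ y ∈ nb b, ((γfun y).length : ℝ) + 1 ≤ K)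
    (ω : Edge d → ℝ) (hω : ∀ e, 0 ≤ ω e)
    (hbig : ∀ (y : Fin d → ℤ) (h : Adj b y), ω (mkEdge h) > K)
    (hsmall : ∀ y ∈ nb b, ∀ E ∈ listEdges (γfun y), ω E < 1)
    (x : Fin d → ℤ) (hx : x ≠ b) :
    T ω a x + 1 ≤ T ω b x := by
  have hbdd : ∀ (u : Fin d → ℤ), BddBelow {t | ∃ γ, IsPath u x γ ∧ t = pathTime ω γ} := by
    intro u
    refine ⟨0, ?_⟩
    rintro t ⟨γ', -, rfl⟩
    exact pathTime_nonneg hω γ'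
  apply le_csInf
  · obtain ⟨γ0, h0⟩ := exists_path b x
    exact ⟨_, γ0, h0, rfl⟩
  rintro t ⟨γ, hγp, rfl⟩
  obtain ⟨y, rest, rfl, hadj, hyp⟩ := path_decomp hγp hx
  have hynb := mem_nb_of_adj hadj
  have hedge : edgeTime ω b y = ω (mkEdge hadj) := dif_pos hadj
  have h1 : pathTime ω (γfun y) ≤ ((γfun y).length : ℝ) :=
    pathTime_le_length _ (hγ y hynb).2.2 (hsmall y hynb)
  obtain ⟨l, hl, -, hlt⟩ := isPath_trans ω (hγ y hynb) hyp
  have hTa : T ω a x ≤ pathTime ω l := csInf_le (hbdd a) ⟨l, hl, rfl⟩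
  have hrest : 0 ≤ pathTime ω (y :: rest) := pathTime_nonneg hω _
  have hbigy := hbig y hadj
  have hKy := hK y hynb
  have hfin : pathTime ω (b :: y :: rest) = edgeTime ω b y + pathTime ω (y :: rest) := rfl
  rw [hfin, hedge]
  rw [hlt] at hTa
  linarith

end Aux6


section Aux7
variable {d : ℕ}

lemma factor_pos (P : Measure (Edge d → ℝ)) [IsProbabilityMeasure P] (hP : IIDExp 1 P)
    (K : ℝ) (hK : 0 ≤ K) (A : Set ℝ) (hA : A = Set.Ioi K ∨ A = Set.Iio 1) (e : Edge d) :
    0 < P ((fun ω => ω e) ⁻¹' A) := by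
  rcases hA with rfl | rfl
  · have heq : (fun ω : Edge d → ℝ => ω e) ⁻¹' (Set.Ioi K) = {ω | ω e > K} := rfl
    rw [heq, hP.2 e K hK]
    exact ENNReal.ofReal_pos.mpr (Real.exp_pos _)
  · by_contra h
    push_neg at h
    have hzero : P ((fun ω : Edge d → ℝ => ω e) ⁻¹' (Set.Iio 1)) = 0 :=
      le_antisymm h zero_le
    have hcover : (Set.univ : Set (Edge d → ℝ)) ⊆
        ((fun ω : Edge d → ℝ => ω e) ⁻¹' (Set.Iio 1)) ∪ {ω | ω e > (1/2 : ℝ)} := by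
      intro ω _
      by_cases hlt : ω e < 1
      · exact Or.inl hlt
      · exact Or.inr (by simp only [Set.mem_setOf_eq]; push_neg at hlt; linarith)
    have hle : (1 : ℝ≥0∞) ≤ P ((fun ω : Edge d → ℝ => ω e) ⁻¹' (Set.Iio 1))
        + P {ω | ω e > (1/2 : ℝ)} := by
      calc (1:ℝ≥0∞) = P Set.univ := measure_univ.symm
      _ ≤ P (((fun ω : Edge d → ℝ => ω e) ⁻¹' (Set.Iio 1)) ∪ {ω | ω e > (1/2:ℝ)}) :=
          measure_mono hcover
      _ ≤ _ := measure_union_le _ _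
    rw [hzero, zero_add, hP.2 e (1/2) (by norm_num)] at hle
    have hexp : Real.exp (-(1 * (1/2 : ℝ))) < 1 := by
      rw [Real.exp_lt_one_iff]
      norm_num
    have : ENNReal.ofReal (Real.exp (-(1 * (1/2:ℝ)))) < 1 := ENNReal.ofReal_lt_one.mpr hexp
    exact absurd (lt_of_le_of_lt hle this) (lt_irrefl _)

lemma nonneg_ae (P : Measure (Edge d → ℝ)) [IsProbabilityMeasure P] (hP : IIDExp 1 P) :
    P {ω : Edge d → ℝ | ∀ e, 0 ≤ ω e}ᶜ = 0 := by
  have hsub : {ω : Edge d → ℝ | ∀ e, 0 ≤ ω e}ᶜ ⊆ ⋃ e : Edge d, {ω | ω e > 0}ᶜ := by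
    intro ω hω
    simp only [Set.mem_compl_iff, Set.mem_setOf_eq, not_forall] at hω
    obtain ⟨e, he⟩ := hω
    exact Set.mem_iUnion.mpr ⟨e, by simp only [Set.mem_compl_iff, Set.mem_setOf_eq]; push_neg; linarith⟩
  have hone : ∀ e : Edge d, P {ω : Edge d → ℝ | ω e > 0}ᶜ = 0 := by
    intro e
    have hmeas : MeasurableSet {ω : Edge d → ℝ | ω e > 0} :=
      measurableSet_lt measurable_const (measurable_pi_apply e)
    rw [prob_compl_eq_one_sub hmeas, hP.2 e 0 le_rfl]
    simp
  refine le_antisymm ?_ zero_le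
  calc P {ω : Edge d → ℝ | ∀ e, 0 ≤ ω e}ᶜ ≤ ∑' e : Edge d, P {ω : Edge d → ℝ | ω e > 0}ᶜ :=
      (measure_mono hsub).trans (measure_iUnion_le _)
  _ = 0 := by simp [hone]

end Aux7

section Aux8
variable {d : ℕ}

lemma key (hd : 2 ≤ d) (P : Measure (Edge d → ℝ)) [IsProbabilityMeasure P]
    (hP : IIDExp 1 P) (a b : Fin d → ℤ) (hab : a ≠ b) :
    0 < P (Gevent {a} {b} ∩ (Gevent {b} {a})ᶜ) := by
  have hpath : ∀ y : Fin d → ℤ, ∃ γ, y ∈ nb b → (IsPath a y γ ∧ ∀ w ∈ γ, w ≠ b) := by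
    intro y
    by_cases hy : y ∈ nb b
    · obtain ⟨γ, h1, h2⟩ := avoid_path hd b a y hab
        (fun h => (adj_ne (adj_of_mem_nb hy)) h.symm)
      exact ⟨γ, fun _ => ⟨h1, h2⟩⟩
    · exact ⟨[], fun h => absurd h hy⟩
  choose γfun hspec using hpath
  set K : ℝ := 1 + ∑ y ∈ nb b, ((γfun y).length : ℝ) with hKdef
  have hK0 : 0 ≤ K := by
    have : (0:ℝ) ≤ ∑ y ∈ nb b, ((γfun y).length : ℝ) :=
      Finset.sum_nonneg fun y _ => by positivity
    linarith
  have hKy : ∀ y ∈ nb b, ((γfun y).length : ℝ) + 1 ≤ K := by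
    intro y hy
    have h1 : ((γfun y).length : ℝ) ≤ ∑ y ∈ nb b, ((γfun y).length : ℝ) :=
      Finset.single_le_sum (f := fun y => ((γfun y).length : ℝ)) (fun y _ => by positivity) hy
    linarith
  set S1 : Finset (Edge d) := (nb b).attach.image
    (fun z => mkEdge (adj_of_mem_nb z.2)) with hS1def
  set S2 : Finset (Edge d) := (nb b).biUnion (fun y => (listEdges (γfun y)).toFinset) with hS2def
  set S : Finset (Edge d) := S1 ∪ S2 with hSdef
  set A : Edge d → Set ℝ := fun e => if b ∈ e.val then Set.Ioi K else Set.Iio 1 with hAdef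
  set B : Set (Edge d → ℝ) := ⋂ e ∈ S, (fun ω => ω e) ⁻¹' A e with hBdef
  have hAmeas : ∀ e, MeasurableSet (A e) := by
    intro e
    rw [hAdef]
    by_cases h : b ∈ e.val
    · simp only [if_pos h]; exact measurableSet_Ioi
    · simp only [if_neg h]; exact measurableSet_Iio
  have hPB : P B = ∏ e ∈ S, P ((fun ω => ω e) ⁻¹' A e) :=
    hP.1.meas_biInter (fun e _ => ⟨A e, hAmeas e, rfl⟩)
  have hBpos : 0 < P B := by
    rw [hPB]
    refine CanonicallyOrderedAdd.prod_pos.mpr fun e _ => ?_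
    refine factor_pos P hP K hK0 (A e) ?_ e
    rw [hAdef]
    by_cases h : b ∈ e.val
    · exact Or.inl (by simp [h])
    · exact Or.inr (by simp [h])
  have hB_big : ∀ ω ∈ B, ∀ (y : Fin d → ℤ) (h : Adj b y), ω (mkEdge h) > K := by
    intro ω hω y h
    have hmem : mkEdge h ∈ S1 := by
      rw [hS1def]
      refine Finset.mem_image.mpr ⟨⟨y, mem_nb_of_adj h⟩, Finset.mem_attach _ _, ?_⟩
      rfl
    have hωe := Set.mem_iInter₂.mp hω (mkEdge h) (Finset.mem_union_left _ hmem)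
    have hbval : b ∈ (mkEdge h).val := by
      show b ∈ s(b, y)
      exact Sym2.mem_iff.mpr (Or.inl rfl)
    rw [hAdef] at hωe
    simp only [Set.mem_preimage, if_pos hbval, Set.mem_Ioi] at hωe
    exact hωe
  have hB_small : ∀ ω ∈ B, ∀ y ∈ nb b, ∀ E ∈ listEdges (γfun y), ω E < 1 := by
    intro ω hω y hy E hE
    have hmem : E ∈ S2 := by
      rw [hS2def]
      exact Finset.mem_biUnion.mpr ⟨y, hy, List.mem_toFinset.mpr hE⟩
    have hωe := Set.mem_iInter₂.mp hω E (Finset.mem_union_right _ hmem)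
    have hbval : b ∉ E.val := listEdges_avoid (γfun y) ((hspec y hy).2) E hE
    rw [hAdef] at hωe
    simp only [Set.mem_preimage, if_neg hbval, Set.mem_Iio] at hωe
    exact hωe
  set N : Set (Edge d → ℝ) := {ω | ∀ e, 0 ≤ ω e} with hNdef
  haveI : Nonempty (Fin d) := ⟨⟨0, by omega⟩⟩
  haveI : Infinite (Fin d → ℤ) := by infer_instance
  have hsubset : B ∩ N ⊆ Gevent {a} {b} ∩ (Gevent {b} {a})ᶜ := by
    rintro ω ⟨hB, hω⟩
    have hcore : ∀ x, x ≠ b → T ω a x + 1 ≤ T ω b x := by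
      intro x hx
      exact core_ineq a b γfun (fun y hy => (hspec y hy).1) K hKy ω hω
        (hB_big ω hB) (fun y hy => hB_small ω hB y hy) x hx
    constructor
    · show ({x | TS ω {a} x < TS ω {b} x}).Infinite
      have hBc : ({b}ᶜ : Set (Fin d → ℤ)).Infinite := (Set.finite_singleton b).infinite_compl
      refine hBc.mono ?_
      intro x hx
      simp only [Set.mem_compl_iff, Set.mem_singleton_iff] at hx
      show TS ω {a} x < TS ω {b} x
      rw [TS_singleton, TS_singleton]
      have := hcore x hx
      linarith
    · show ¬ ({x | TS ω {b} x < TS ω {a} x}).Infinite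
      rw [Set.not_infinite]
      refine (Set.finite_singleton b).subset ?_
      intro x hx
      simp only [Set.mem_setOf_eq] at hx
      rw [TS_singleton, TS_singleton] at hx
      by_contra hxb
      have := hcore x hxb
      linarith
  have hN0 : P Nᶜ = 0 := nonneg_ae P hP
  have h1 : P B ≤ P (B ∩ N) := by
    calc P B ≤ P ((B ∩ N) ∪ Nᶜ) := by
          refine measure_mono fun ω hω => ?_
          by_cases h : ω ∈ N
          · exact Or.inl ⟨hω, h⟩
          · exact Or.inr h
    _ ≤ P (B ∩ N) + P Nᶜ := measure_union_le _ _
    _ = P (B ∩ N) := by rw [hN0, add_zero]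
  exact lt_of_lt_of_le hBpos (h1.trans (measure_mono hsubset))

end Aux8

/-- In the symmetric two-type Richardson model on `ℤ^d` (`d ≥ 2`, both rates 1) started from
`ξ₁ = {0}` and `ξ₂ = {e₁}`, each strangulation outcome has positive probability. -/
theorem strangulation_has_positive_probability (d : ℕ) (hd : 2 ≤ d)
    (P : Measure (Edge d → ℝ)) [IsProbabilityMeasure P] (hP : IIDExp 1 P) :
    0 < P (Gevent {origin d} {e1 d} ∩ (Gevent {e1 d} {origin d})ᶜ) ∧
    0 < P (Gevent {e1 d} {origin d} ∩ (Gevent {origin d} {e1 d})ᶜ) := by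
  have h01 : origin d ≠ e1 d := by
    intro h
    have := congrFun h ⟨0, by omega⟩
    simp [origin, e1] at this
  exact ⟨key hd P hP _ _ h01, key hd P hP _ _ (Ne.symm h01)⟩
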